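/- For data tables with d = 2 and parameters (s, m), the worst-case minimal number of ontic states over all such data tables equals min{2^m, s}: (a) every d = 2 data table admits an ontological factorization with Ω = min{2^m, s} ontic states, and (b) there exists a d = 2 data table with parameters (s,m) for which every ontological factorization has Ω ≥ min{2^m, s}. -/
import Mathlib


open Finset

/-- An ontological factorization over `Ω` ontic states of a `d = 2` data table encoded by its
first-outcome probability matrix `T ∈ [0,1]^{m×s}`. -/
def IsOF2 {m s : ℕ} (T : Matrix (Fin m) (Fin s) ℝ) (Ω : ℕ)
    (P : Matrix (Fin Ω) (Fin s) ℝ) (M : Fin m → Fin Ω → ℝ) : Prop :=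
  (∀ j k, 0 ≤ P j k) ∧ (∀ k, ∑ j, P j k = 1) ∧
  (∀ x j, 0 ≤ M x j ∧ M x j ≤ 1) ∧
  (∀ x k, ∑ j, M x j * P j k = T x k)

/-- Upper bound, Model 1: `Ω = s`, `P` the identity. -/
lemma model1 {m s Ω : ℕ} (e : Fin Ω ≃ Fin s) (T : Matrix (Fin m) (Fin s) ℝ)
    (hT : ∀ x k, 0 ≤ T x k ∧ T x k ≤ 1) :
    ∃ (P : Matrix (Fin Ω) (Fin s) ℝ) (M : Fin m → Fin Ω → ℝ), IsOF2 T Ω P M := by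
  refine ⟨fun j k => if e j = k then 1 else 0, fun x j => T x (e j), ?_, ?_, ?_, ?_⟩
  · intro j k; dsimp only; split <;> norm_num
  · intro k
    simp only [Equiv.apply_eq_iff_eq_symm_apply]
    simp
  · intro x j; exact hT x (e j)
  · intro x k
    simp only [Equiv.apply_eq_iff_eq_symm_apply]
    rw [Finset.sum_eq_single (e.symm k)]
    · simp
    · intro b _ hb; simp [hb]
    · simp

/-- Upper bound, Model 2: `Ω = 2^m`, ontic states are bit strings, `P` columns are product
distributions and `M` are deterministic indicators. -/
lemma model2 {m s Ω : ℕ} (e : (Fin m → Bool) ≃ Fin Ω) (T : Matrix (Fin m) (Fin s) ℝ)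
    (hT : ∀ x k, 0 ≤ T x k ∧ T x k ≤ 1) :
    ∃ (P : Matrix (Fin Ω) (Fin s) ℝ) (M : Fin m → Fin Ω → ℝ), IsOF2 T Ω P M := by
  classical
  set w : Fin m → Fin s → Bool → ℝ := fun x k t => if t then T x k else 1 - T x k with hw
  refine ⟨fun j k => ∏ x, w x k (e.symm j x),
          fun x j => if e.symm j x then 1 else 0, ?_, ?_, ?_, ?_⟩
  · intro j k
    apply Finset.prod_nonneg
    intro x _
    rcases hT x k with ⟨h0, h1⟩
    simp only [hw]; split <;> linarith
  · intro k
    rw [Fintype.sum_equiv e.symm (fun j => ∏ x, w x k (e.symm j x))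
        (fun b => ∏ x, w x k (b x)) (fun j => rfl)] at *
    rw [← Fintype.piFinset_univ, ← Finset.prod_univ_sum (fun _ => (univ : Finset Bool))
        (fun x t => w x k t)]
    apply Finset.prod_eq_one
    intro x _
    simp [hw]
  · intro x j; dsimp only; split <;> norm_num
  · intro x k
    set g : Fin m → Bool → ℝ := fun y t => if y = x then (if t then T x k else 0) else w y k t
      with hg
    have hsum : ∀ j : Fin Ω,
        (if e.symm j x then (1:ℝ) else 0) * ∏ y, w y k (e.symm j y) = ∏ y, g y (e.symm j y) := by
      intro j
      set b := e.symm j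
      rw [← Finset.mul_prod_erase univ (fun y => g y (b y)) (Finset.mem_univ x),
          ← Finset.mul_prod_erase univ (fun y => w y k (b y)) (Finset.mem_univ x)]
      have h2 : ∀ y ∈ univ.erase x, g y (b y) = w y k (b y) := by
        intro y hy
        simp only [hg]
        rw [if_neg (Finset.mem_erase.mp hy).1]
      rw [Finset.prod_congr rfl h2]
      simp only [hg, if_pos rfl, hw]
      by_cases hb : b x <;> simp [hb]
    simp only [fun j => hsum j]
    rw [Fintype.sum_equiv e.symm (fun j => ∏ y, g y (e.symm j y))
        (fun b => ∏ y, g y (b y)) (fun j => rfl)]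
    rw [← Fintype.piFinset_univ, ← Finset.prod_univ_sum (fun _ => (univ : Finset Bool))
        (fun y t => g y t)]
    rw [Finset.prod_eq_single_of_mem x (Finset.mem_univ x)]
    · simp [hg]
    · intro y _ hy
      simp only [hg, if_neg hy, hw]
      simp

/-- Lower bound key step: for a 0/1-valued table, each column has a supporting ontic state on
which `M` reads off the column exactly. -/
lemma key {m s Ω : ℕ} (T : Matrix (Fin m) (Fin s) ℝ)
    (hT : ∀ x k, T x k = 0 ∨ T x k = 1)
    (P : Matrix (Fin Ω) (Fin s) ℝ) (M : Fin m → Fin Ω → ℝ)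
    (h : IsOF2 T Ω P M) :
    ∃ f : Fin s → Fin Ω, ∀ k x, M x (f k) = T x k := by
  classical
  obtain ⟨hP0, hP1, hM, hMP⟩ := h
  have hex : ∀ k : Fin s, ∃ j, 0 < P j k := by
    intro k
    by_contra hc
    push_neg at hc
    have : ∑ j, P j k = 0 := Finset.sum_eq_zero fun j _ => le_antisymm (hc j) (hP0 j k)
    rw [hP1 k] at this; norm_num at this
  choose f hf using hex
  refine ⟨f, fun k x => ?_⟩
  rcases hT x k with h0 | h1
  · -- sum of nonneg terms is 0
    have hz : ∑ j, M x j * P j k = 0 := by rw [hMP x k, h0]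
    have := (Finset.sum_eq_zero_iff_of_nonneg
      (fun j _ => mul_nonneg (hM x j).1 (hP0 j k))).mp hz (f k) (Finset.mem_univ _)
    rw [h0]
    rcases mul_eq_zero.mp this with h | h
    · exact h
    · exact absurd h (ne_of_gt (hf k))
  · have hz : ∑ j, (1 - M x j) * P j k = 0 := by
      have : ∑ j, (1 - M x j) * P j k = ∑ j, P j k - ∑ j, M x j * P j k := by
        rw [← Finset.sum_sub_distrib]
        apply Finset.sum_congr rfl
        intro j _; ring
      rw [this, hP1 k, hMP x k, h1]; ring
    have := (Finset.sum_eq_zero_iff_of_nonneg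
      (fun j _ => mul_nonneg (by linarith [(hM x j).2]) (hP0 j k))).mp hz (f k)
      (Finset.mem_univ _)
    rcases mul_eq_zero.mp this with h | h
    · rw [h1]; linarith
    · exact absurd h (ne_of_gt (hf k))

/-- For `d = 2` data tables with parameters `(s, m)`, the worst-case minimal number of ontic
states equals `min {2^m, s}`: every such table has an ontological factorization with
`Ω = min (2^m) s`, and some table requires `Ω ≥ min (2^m) s` in every factorization. -/
theorem stmt_6 (s m : ℕ) :
    (∀ T : Matrix (Fin m) (Fin s) ℝ, (∀ x k, 0 ≤ T x k ∧ T x k ≤ 1) →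
      ∃ (P : Matrix (Fin (min (2 ^ m) s)) (Fin s) ℝ)
        (M : Fin m → Fin (min (2 ^ m) s) → ℝ), IsOF2 T (min (2 ^ m) s) P M) ∧
    (∃ T : Matrix (Fin m) (Fin s) ℝ, (∀ x k, 0 ≤ T x k ∧ T x k ≤ 1) ∧
      ∀ (Ω : ℕ) (P : Matrix (Fin Ω) (Fin s) ℝ) (M : Fin m → Fin Ω → ℝ),
        IsOF2 T Ω P M → min (2 ^ m) s ≤ Ω) := by
  constructor
  · intro T hT
    rcases le_total s (2 ^ m) with h | h
    · exact model1 (finCongr (min_eq_right h)) T hT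
    · exact model2 (Fintype.equivFinOfCardEq (by simp [min_eq_left h])) T hT
  · refine ⟨fun x k => if Nat.testBit k.val x.val then 1 else 0, ?_, ?_⟩
    · intro x k; dsimp only; split <;> norm_num
    · intro Ω P M hOF
      obtain ⟨f, hf⟩ := key _ (fun x k => by split <;> simp) P M hOF
      have hg : Function.Injective
          (fun a : Fin (min (2 ^ m) s) => f (Fin.castLE (min_le_right _ _) a)) := by
        intro a b hab
        have hcol : ∀ x : Fin m,
            (if Nat.testBit a.val x.val then (1:ℝ) else 0) =
            (if Nat.testBit b.val x.val then (1:ℝ) else 0) := by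
          intro x
          have ha := hf (Fin.castLE (min_le_right _ _) a) x
          have hb := hf (Fin.castLE (min_le_right _ _) b) x
          simp only [Fin.coe_castLE] at ha hb
          rw [← ha, ← hb]; exact congrArg (M x) hab
        have hbit : ∀ i : ℕ, Nat.testBit a.val i = Nat.testBit b.val i := by
          intro i
          by_cases hi : i < m
          · have := hcol ⟨i, hi⟩
            by_cases h1 : Nat.testBit a.val i <;> by_cases h2 : Nat.testBit b.val i <;>
              simp [h1, h2] at this ⊢
          · push_neg at hi
            have ha2 : a.val < 2 ^ i := lt_of_lt_of_le
              (lt_of_lt_of_le a.isLt (min_le_left _ _)) (Nat.pow_le_pow_right (by norm_num) hi)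
            have hb2 : b.val < 2 ^ i := lt_of_lt_of_le
              (lt_of_lt_of_le b.isLt (min_le_left _ _)) (Nat.pow_le_pow_right (by norm_num) hi)
            rw [Nat.testBit_lt_two_pow ha2, Nat.testBit_lt_two_pow hb2]
        exact Fin.ext (Nat.eq_of_testBit_eq hbit)
      have := Fintype.card_le_of_injective _ hg
      simpa using this
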